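/- arXiv:2110.08986 — 2 statements merged into one kernel-verified Lean document; each statement's English description precedes it below -/
import Mathlib

section
/- Suppose f is Lipschitz continuous with constant M₁ with respect to the Frobenius norm. Let X ∈ ℝ^{n×p} satisfy ‖XᵀX − I_p‖_F ≤ 1/6 (so XᵀX is positive definite and P(X) is defined). Then h(P(X)) ≤ h(X) − (β/4 − M₁/2)·‖XᵀX − I_p‖_F². -/
open Matrix

attribute [local instance] Matrix.frobeniusNormedAddCommGroup Matrix.frobeniusNormedSpace

namespace ExPen

noncomputable def finner {n p : ℕ} (A B : Matrix (Fin n) (Fin p) ℝ) : ℝ := (Aᵀ * B).trace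

noncomputable def Phi {p : ℕ} (M : Matrix (Fin p) (Fin p) ℝ) : Matrix (Fin p) (Fin p) ℝ :=
  (1 / 2 : ℝ) • (M + Mᵀ)

noncomputable def Amap {n p : ℕ} (X : Matrix (Fin n) (Fin p) ℝ) : Matrix (Fin p) (Fin p) ℝ :=
  (3 / 2 : ℝ) • (1 : Matrix (Fin p) (Fin p) ℝ) - (1 / 2 : ℝ) • (Xᵀ * X)

noncomputable def g {n p : ℕ} (f : Matrix (Fin n) (Fin p) ℝ → ℝ)
    (X : Matrix (Fin n) (Fin p) ℝ) : ℝ := f (X * Amap X)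

noncomputable def hpen {n p : ℕ} (f : Matrix (Fin n) (Fin p) ℝ → ℝ) (β : ℝ)
    (X : Matrix (Fin n) (Fin p) ℝ) : ℝ := g f X + β / 4 * ‖Xᵀ * X - 1‖ ^ 2

noncomputable def dualCLM {n p : ℕ} (G : Matrix (Fin n) (Fin p) ℝ) :
    Matrix (Fin n) (Fin p) ℝ →L[ℝ] ℝ :=
  LinearMap.toContinuousLinearMap
    { toFun := fun D => (Gᵀ * D).trace
      map_add' := by intro D E; simp [Matrix.mul_add]
      map_smul' := by intro c D; simp [Matrix.mul_smul] }

def HasGradAt {n p : ℕ} (φ : Matrix (Fin n) (Fin p) ℝ → ℝ)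
    (X G : Matrix (Fin n) (Fin p) ℝ) : Prop :=
  HasFDerivAt φ (dualCLM G) X

noncomputable def specNorm {n p : ℕ} (X : Matrix (Fin n) (Fin p) ℝ) : ℝ :=
  ‖LinearMap.toContinuousLinearMap
    (Matrix.toEuclideanLin X : EuclideanSpace ℝ (Fin p) →ₗ[ℝ] EuclideanSpace ℝ (Fin n))‖

lemma posSemidef_tmul {n p : ℕ} (X : Matrix (Fin n) (Fin p) ℝ) : (Xᵀ * X).PosSemidef := by
  simpa [Matrix.conjTranspose_eq_transpose_of_trivial] using
    Matrix.posSemidef_conjTranspose_mul_self X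

noncomputable def psdSqrt {p : ℕ} {A : Matrix (Fin p) (Fin p) ℝ} (hA : A.PosSemidef) :
    Matrix (Fin p) (Fin p) ℝ :=
  hA.1.eigenvectorUnitary.1 * diagonal ((↑) ∘ (√·) ∘ hA.1.eigenvalues) *
  (star hA.1.eigenvectorUnitary : Matrix (Fin p) (Fin p) ℝ)

noncomputable def Pst {n p : ℕ} (X : Matrix (Fin n) (Fin p) ℝ) : Matrix (Fin n) (Fin p) ℝ :=
  X * (psdSqrt (posSemidef_tmul X))⁻¹

lemma fnorm_sq {m q : ℕ} (A : Matrix (Fin m) (Fin q) ℝ) :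
    ‖A‖ ^ 2 = ∑ i, ∑ j, (A i j) ^ 2 := by
  have h : (0:ℝ) ≤ ∑ i, ∑ j, ‖A i j‖ ^ (2:ℝ) := by positivity
  rw [Matrix.frobenius_norm_def, ← Real.rpow_natCast _ 2, ← Real.rpow_mul h]
  norm_num

lemma fnorm_sq_eq_trace {m q : ℕ} (A : Matrix (Fin m) (Fin q) ℝ) :
    ‖A‖ ^ 2 = (Aᵀ * A).trace := by
  rw [fnorm_sq]
  simp only [Matrix.trace, Matrix.diag, Matrix.mul_apply, Matrix.transpose_apply, sq]
  rw [Finset.sum_comm]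

lemma fnorm_diag {p : ℕ} (v : Fin p → ℝ) :
    ‖Matrix.diagonal v‖ ^ 2 = ∑ i, (v i) ^ 2 := by
  rw [fnorm_sq]
  simp [Matrix.diagonal_apply, Finset.sum_ite_eq', sq]

lemma fnorm_conj {p : ℕ} (V M : Matrix (Fin p) (Fin p) ℝ)
    (hV : Vᵀ * V = 1) :
    ‖V * M * Vᵀ‖ ^ 2 = ‖M‖ ^ 2 := by
  rw [fnorm_sq_eq_trace, fnorm_sq_eq_trace]
  have h1 : (V * M * Vᵀ)ᵀ = V * Mᵀ * Vᵀ := by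
    simp [Matrix.transpose_mul, Matrix.mul_assoc]
  rw [h1]
  rw [show (V * Mᵀ * Vᵀ) * (V * M * Vᵀ) = V * (Mᵀ * (Vᵀ * V) * M) * Vᵀ by
    simp only [Matrix.mul_assoc]]
  rw [hV, Matrix.mul_one, Matrix.trace_mul_comm (V * (Mᵀ * M)) Vᵀ]
  rw [show Vᵀ * (V * (Mᵀ * M)) = (Vᵀ * V) * (Mᵀ * M) by simp [Matrix.mul_assoc], hV,
    Matrix.one_mul]

lemma key_real (t : ℝ) (ht0 : 0 < t) (h56 : 5/6 ≤ t^2) :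
    t^2 * (t⁻¹ - (3/2 - t^2/2))^2 ≤ (1/4) * ((t^2-1)^2)^2 := by
  have ht16 : (1/6 : ℝ) ≤ t := by nlinarith
  have htw : t * (t⁻¹ - (3/2 - t^2/2)) = (1/2)*(t-1)^2*(t+2) := by field_simp; ring
  have hq : t + 2 ≤ (t+1)^2 := by nlinarith
  have h1 : (0:ℝ) ≤ ((t+1)^2 - (t+2)) * ((t+1)^2 + (t+2)) :=
    mul_nonneg (by linarith) (by nlinarith [sq_nonneg (t+1)])
  have hq2 : (t+2)^2 ≤ ((t+1)^2)^2 := by nlinarith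
  calc t^2 * (t⁻¹ - (3/2 - t^2/2))^2 = (t * (t⁻¹ - (3/2 - t^2/2)))^2 := by ring
    _ = (1/4)*((t-1)^2)^2 * (t+2)^2 := by rw [htw]; ring
    _ ≤ (1/4)*((t-1)^2)^2 * ((t+1)^2)^2 := mul_le_mul_of_nonneg_left hq2 (by positivity)
    _ = (1/4)*((t^2-1)^2)^2 := by ring

theorem statement_12 {n p : ℕ} (f : Matrix (Fin n) (Fin p) ℝ → ℝ) (β M₁ : ℝ)
    (hLip : ∀ A B : Matrix (Fin n) (Fin p) ℝ, |f A - f B| ≤ M₁ * ‖A - B‖)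
    (X : Matrix (Fin n) (Fin p) ℝ) (hX : ‖Xᵀ * X - 1‖ ≤ 1 / 6) :
    hpen f β (Pst X) ≤ hpen f β X - (β / 4 - M₁ / 2) * ‖Xᵀ * X - 1‖ ^ 2 := by
  classical
  have hA : (Xᵀ * X).IsHermitian := (posSemidef_tmul X).1
  set V : Matrix (Fin p) (Fin p) ℝ := (hA.eigenvectorUnitary : Matrix (Fin p) (Fin p) ℝ) with hVdef
  set μ : Fin p → ℝ := hA.eigenvalues with hμdef
  have hV1 : Vᵀ * V = 1 := by
    have := Matrix.mem_unitaryGroup_iff'.mp hA.eigenvectorUnitary.2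
    simpa [Matrix.star_eq_conjTranspose, Matrix.conjTranspose_eq_transpose_of_trivial] using this
  have hV2 : V * Vᵀ = 1 := by
    have := Matrix.mem_unitaryGroup_iff.mp hA.eigenvectorUnitary.2
    simpa [Matrix.star_eq_conjTranspose, Matrix.conjTranspose_eq_transpose_of_trivial] using this
  have hspec : Xᵀ * X = V * Matrix.diagonal μ * Vᵀ := by
    have := hA.spectral_theorem
    simpa [Matrix.star_eq_conjTranspose, Matrix.conjTranspose_eq_transpose_of_trivial,
      Function.comp] using this
  have hS : psdSqrt (posSemidef_tmul X) = V * Matrix.diagonal (fun i => Real.sqrt (μ i)) * Vᵀ := by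
    unfold psdSqrt
    rfl
  -- conjugation algebra
  have hmul : ∀ a b : Fin p → ℝ,
      (V * Matrix.diagonal a * Vᵀ) * (V * Matrix.diagonal b * Vᵀ)
        = V * Matrix.diagonal (fun i => a i * b i) * Vᵀ := by
    have hVcancel : ∀ M : Matrix (Fin p) (Fin p) ℝ, Vᵀ * (V * M) = M := by
      intro M; rw [← Matrix.mul_assoc, hV1, Matrix.one_mul]
    intro a b
    simp only [Matrix.mul_assoc]
    rw [hVcancel, ← Matrix.mul_assoc (Matrix.diagonal a) (Matrix.diagonal b) Vᵀ,
      Matrix.diagonal_mul_diagonal]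
  have hone : V * Matrix.diagonal (fun _ : Fin p => (1:ℝ)) * Vᵀ = 1 := by
    rw [show Matrix.diagonal (fun _ : Fin p => (1:ℝ)) = 1 from Matrix.diagonal_one,
      Matrix.mul_one, hV2]
  -- eigenvalue bounds
  have hE2 : ‖Xᵀ * X - 1‖ ^ 2 ≤ 1/36 := by
    nlinarith [norm_nonneg (Xᵀ * X - 1), hX]
  have hEdiag : Xᵀ * X - 1 = V * Matrix.diagonal (fun i => μ i - 1) * Vᵀ := by
    have : Matrix.diagonal (fun i => μ i - 1)
        = Matrix.diagonal μ - Matrix.diagonal (fun _ : Fin p => (1:ℝ)) := by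
      rw [← Matrix.diagonal_sub]
    rw [this, Matrix.mul_sub, Matrix.sub_mul, hone, ← hspec]
  have hnormE : ‖Xᵀ * X - 1‖ ^ 2 = ∑ i, (μ i - 1) ^ 2 := by
    rw [hEdiag, fnorm_conj _ _ hV1, fnorm_diag]
  have hterm : ∀ i, (μ i - 1) ^ 2 ≤ ‖Xᵀ * X - 1‖ ^ 2 := by
    intro i
    rw [hnormE]
    exact Finset.single_le_sum (f := fun i => (μ i - 1)^2)
      (fun j _ => sq_nonneg _) (Finset.mem_univ i)
  have hμ : ∀ i, 5/6 ≤ μ i := by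
    intro i
    nlinarith [hterm i, hE2]
  have htpos : ∀ i, 0 < Real.sqrt (μ i) := fun i => Real.sqrt_pos.mpr (by linarith [hμ i])
  have htsq : ∀ i, (Real.sqrt (μ i)) ^ 2 = μ i := fun i => Real.sq_sqrt (by linarith [hμ i])
  -- inverse of sqrt
  set Sinv : Matrix (Fin p) (Fin p) ℝ :=
    V * Matrix.diagonal (fun i => (Real.sqrt (μ i))⁻¹) * Vᵀ with hSinvdef
  have hSSinv : psdSqrt (posSemidef_tmul X) * Sinv = 1 := by
    rw [hS, hSinvdef, hmul]
    rw [show (fun i => Real.sqrt (μ i) * (Real.sqrt (μ i))⁻¹) = fun _ : Fin p => (1:ℝ) by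
      funext i; exact mul_inv_cancel₀ (htpos i).ne']
    exact hone
  have hP : Pst X = X * Sinv := by
    rw [Pst, Matrix.inv_eq_right_inv hSSinv]
  have hSinvT : Sinvᵀ = Sinv := by
    rw [hSinvdef]
    simp [Matrix.transpose_mul, Matrix.diagonal_transpose, Matrix.mul_assoc]
  -- PᵀP = 1
  have hPTP : (Pst X)ᵀ * Pst X = 1 := by
    rw [hP, Matrix.transpose_mul, hSinvT]
    rw [show Sinv * Xᵀ * (X * Sinv) = Sinv * (Xᵀ * X) * Sinv by simp [Matrix.mul_assoc]]
    rw [hspec, hSinvdef, hmul, hmul]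
    rw [show (fun i => (fun i => (Real.sqrt (μ i))⁻¹ * μ i) i * (Real.sqrt (μ i))⁻¹)
        = fun _ : Fin p => (1:ℝ) by
      funext i
      have h := htsq i
      have h0 := (htpos i).ne'
      field_simp
      exact h.symm]
    exact hone
  -- hpen at Pst X
  have hAmapP : Amap (Pst X) = 1 := by
    rw [Amap, hPTP, ← sub_smul]
    norm_num
  have hpenP : hpen f β (Pst X) = f (Pst X) := by
    rw [hpen, g, hAmapP, Matrix.mul_one, hPTP, sub_self, norm_zero]
    ring_nf
  -- the difference matrix
  set w : Fin p → ℝ := fun i => (Real.sqrt (μ i))⁻¹ - (3/2 - μ i / 2) with hwdef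
  have hAmapX : Amap X = V * Matrix.diagonal (fun i => 3/2 - μ i / 2) * Vᵀ := by
    have hd : Matrix.diagonal (fun i => 3/2 - μ i / 2)
        = (3/2 : ℝ) • (1 : Matrix (Fin p) (Fin p) ℝ) - (1/2 : ℝ) • Matrix.diagonal μ := by
      ext i j
      by_cases h : i = j <;>
        simp [Matrix.diagonal_apply, Matrix.one_apply, h] <;> ring
    rw [Amap, hspec, hd]
    simp only [Matrix.mul_sub, Matrix.sub_mul, Matrix.mul_smul, Matrix.smul_mul,
      Matrix.mul_one, hV2]
  have hdiff : Pst X - X * Amap X = X * (V * Matrix.diagonal w * Vᵀ) := by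
    rw [hP, hAmapX, ← Matrix.mul_sub]
    congr 1
    rw [hSinvdef, ← Matrix.sub_mul, ← Matrix.mul_sub, ← Matrix.diagonal_sub]
    congr 1
    funext i
    simp [hwdef]
  have hnormdiff : ‖Pst X - X * Amap X‖ ^ 2 = ∑ i, μ i * (w i) ^ 2 := by
    rw [hdiff, fnorm_sq_eq_trace]
    have ht : (X * (V * Matrix.diagonal w * Vᵀ))ᵀ = V * Matrix.diagonal w * Vᵀ * Xᵀ := by
      simp [Matrix.transpose_mul, Matrix.diagonal_transpose, Matrix.mul_assoc]
    rw [ht]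
    rw [show V * Matrix.diagonal w * Vᵀ * Xᵀ * (X * (V * Matrix.diagonal w * Vᵀ))
        = (V * Matrix.diagonal w * Vᵀ) * (Xᵀ * X) * (V * Matrix.diagonal w * Vᵀ) by
      simp [Matrix.mul_assoc]]
    rw [hspec, hmul, hmul]
    rw [Matrix.trace_mul_comm, show Vᵀ * (V * Matrix.diagonal
        (fun i => (fun i => w i * μ i) i * w i)) = (Vᵀ * V) * Matrix.diagonal
        (fun i => (fun i => w i * μ i) i * w i) by simp [Matrix.mul_assoc], hV1, Matrix.one_mul,
      Matrix.trace_diagonal]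
    congr 1
    funext i
    ring
  -- pointwise inequality
  have hkey : ∀ i, μ i * (w i) ^ 2 ≤ (1/4) * ((μ i - 1)^2) * ‖Xᵀ * X - 1‖ ^ 2 := by
    intro i
    have step1 : μ i * (w i) ^ 2 ≤ (1/4) * ((μ i - 1)^2) ^ 2 := by
      have h := key_real (Real.sqrt (μ i)) (htpos i) (by rw [htsq i]; exact hμ i)
      rw [htsq i] at h
      simpa [hwdef] using h
    calc μ i * (w i) ^ 2 ≤ (1/4) * ((μ i - 1)^2) ^ 2 := step1
      _ ≤ (1/4) * ((μ i - 1)^2) * ‖Xᵀ * X - 1‖ ^ 2 := by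
          rw [show (1/4 : ℝ) * ((μ i - 1)^2) ^ 2 = (1/4) * ((μ i - 1)^2) * (μ i - 1)^2 by ring]
          exact mul_le_mul_of_nonneg_left (hterm i) (by positivity)
  -- summing up
  have hsum : ‖Pst X - X * Amap X‖ ^ 2 ≤ ((1/2) * ‖Xᵀ * X - 1‖ ^ 2) ^ 2 := by
    rw [hnormdiff]
    calc ∑ i, μ i * (w i) ^ 2
        ≤ ∑ i, (1/4) * ((μ i - 1)^2) * ‖Xᵀ * X - 1‖ ^ 2 :=
          Finset.sum_le_sum (fun i _ => hkey i)
      _ = (1/4) * (∑ i, (μ i - 1)^2) * ‖Xᵀ * X - 1‖ ^ 2 := by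
          rw [← Finset.sum_mul, Finset.mul_sum]
      _ = ((1/2) * ‖Xᵀ * X - 1‖ ^ 2) ^ 2 := by rw [← hnormE]; ring
  have hdistR : ‖Pst X - X * Amap X‖ ≤ (1/2) * ‖Xᵀ * X - 1‖ ^ 2 := by
    have h1 : (0:ℝ) ≤ ‖Pst X - X * Amap X‖ := norm_nonneg _
    have h2 : (0:ℝ) ≤ (1/2) * ‖Xᵀ * X - 1‖ ^ 2 := by positivity
    nlinarith [hsum]
  -- Lipschitz step
  have hLipstep : f (Pst X) ≤ f (X * Amap X) + M₁ * ‖Pst X - X * Amap X‖ := by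
    have := hLip (Pst X) (X * Amap X)
    have habs := abs_le.mp this |>.2
    have := le_abs_self (f (Pst X) - f (X * Amap X))
    have h := hLip (Pst X) (X * Amap X)
    have := (le_abs_self (f (Pst X) - f (X * Amap X))).trans h
    linarith
  -- nonnegativity of M₁ or degenerate case
  have hM : 0 ≤ M₁ ∨ ‖Xᵀ * X - 1‖ = 0 := by
    by_cases hp0 : p = 0
    · right
      subst hp0
      rw [show Xᵀ * X - 1 = 0 by ext i j; exact i.elim0]
      exact norm_zero
    by_cases hn0 : n = 0
    · exfalso
      subst hn0
      have hXX : Xᵀ * X = 0 := by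
        ext i j
        simp [Matrix.mul_apply]
      have h1 : ‖Xᵀ * X - 1‖ ^ 2 = ∑ i : Fin p, ∑ j : Fin p, ((0 - 1 : Matrix (Fin p) (Fin p) ℝ) i j) ^ 2 := by
        rw [hXX, fnorm_sq]
      have h2 : (1:ℝ) ≤ ‖Xᵀ * X - 1‖ ^ 2 := by
        rw [h1]
        have hpe : ∃ i : Fin p, True := ⟨⟨0, Nat.pos_of_ne_zero hp0⟩, trivial⟩
        obtain ⟨i0, -⟩ := hpe
        have : (1:ℝ) ≤ ∑ j : Fin p, ((0 - 1 : Matrix (Fin p) (Fin p) ℝ) i0 j) ^ 2 := by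
          have : ((0 - 1 : Matrix (Fin p) (Fin p) ℝ) i0 i0) ^ 2 = 1 := by
            simp [Matrix.one_apply]
          calc (1:ℝ) = ((0 - 1 : Matrix (Fin p) (Fin p) ℝ) i0 i0) ^ 2 := this.symm
            _ ≤ _ := Finset.single_le_sum (f := fun j => ((0 - 1 : Matrix (Fin p) (Fin p) ℝ) i0 j) ^ 2)
                (fun j _ => sq_nonneg _) (Finset.mem_univ i0)
        calc (1:ℝ) ≤ ∑ j : Fin p, ((0 - 1 : Matrix (Fin p) (Fin p) ℝ) i0 j) ^ 2 := this
          _ ≤ _ := Finset.single_le_sum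
              (f := fun i => ∑ j : Fin p, ((0 - 1 : Matrix (Fin p) (Fin p) ℝ) i j) ^ 2)
              (fun i _ => Finset.sum_nonneg fun j _ => sq_nonneg _) (Finset.mem_univ i0)
      linarith [hE2]
    · left
      set B : Matrix (Fin n) (Fin p) ℝ := Matrix.of (fun _ _ => (1:ℝ)) with hBdef
      have hBne : B ≠ 0 := by
        intro hB0
        have := congr_fun (congr_fun hB0 ⟨0, Nat.pos_of_ne_zero hn0⟩) ⟨0, Nat.pos_of_ne_zero hp0⟩
        simp [hBdef] at this
      have hBnorm : ‖B - 0‖ > 0 := by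
        rw [sub_zero]
        exact norm_pos_iff.mpr hBne
      have h := hLip B 0
      have h0 := abs_nonneg (f B - f 0)
      by_contra hMneg
      push_neg at hMneg
      have hlt : M₁ * ‖B - 0‖ < 0 := mul_neg_of_neg_of_pos hMneg hBnorm
      linarith
  -- final assembly
  have hpenX : hpen f β X = f (X * Amap X) + β / 4 * ‖Xᵀ * X - 1‖ ^ 2 := rfl
  rcases hM with hM | hM
  · have h1 : M₁ * ‖Pst X - X * Amap X‖ ≤ M₁ * ((1/2) * ‖Xᵀ * X - 1‖ ^ 2) :=
      mul_le_mul_of_nonneg_left hdistR hM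
    have hgoal : hpen f β X - (β / 4 - M₁ / 2) * ‖Xᵀ * X - 1‖ ^ 2
        = f (X * Amap X) + (M₁/2) * ‖Xᵀ * X - 1‖ ^ 2 := by rw [hpenX]; ring
    rw [hpenP, hgoal]
    linarith [hLipstep]
  · have hPeq : Pst X = X * Amap X := by
      have h := hdistR
      rw [hM] at h
      norm_num at h
      exact sub_eq_zero.mp h
    have hgoal2 : hpen f β X - (β / 4 - M₁ / 2) * ‖Xᵀ * X - 1‖ ^ 2 = f (X * Amap X) := by
      rw [hpenX, hM]; ring
    rw [hpenP, hgoal2, hPeq]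

end ExPen
end

section
/- Suppose f is differentiable, ‖G(X)‖_F ≤ M₁ for all X ∈ Ω, ∇g is Lipschitz continuous on Ω with constant M₂ (with respect to the Frobenius norm), and β ≥ max{12·M₁, 6·M₂} with β > 0. Then for every X ∈ ℝ^{n×p} with ‖XᵀX − I_p‖_F ≤ 1/6, it holds that ‖∇h(X)‖_F ≥ (1/2)·‖grad f(P(X))‖_F + (β/4)·‖XᵀX − I_p‖_F. -/
open Matrix

attribute [local instance] Matrix.frobeniusNormedAddCommGroup Matrix.frobeniusNormedSpace

namespace ExPen

lemma psdSqrt_mul_self {p : ℕ} {A : Matrix (Fin p) (Fin p) ℝ} (hA : A.PosSemidef) :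
    psdSqrt hA * psdSqrt hA = A := by
  have hUU : (star hA.1.eigenvectorUnitary : Matrix (Fin p) (Fin p) ℝ)
      * hA.1.eigenvectorUnitary.1 = 1 := Unitary.coe_star_mul_self _
  have hspec := hA.1.spectral_theorem
  rw [Unitary.conjStarAlgAut_apply] at hspec
  have hdd : diagonal (((↑) ∘ (√·) ∘ hA.1.eigenvalues) : Fin p → ℝ)
      * diagonal (((↑) ∘ (√·) ∘ hA.1.eigenvalues) : Fin p → ℝ)
      = diagonal (RCLike.ofReal ∘ hA.1.eigenvalues) := by
    rw [diagonal_mul_diagonal]; congr 1; funext i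
    simp [Real.mul_self_sqrt (hA.eigenvalues_nonneg i)]
  unfold psdSqrt
  conv_rhs => rw [hspec]
  rw [← hdd]
  simp only [Matrix.mul_assoc]
  rw [← Matrix.mul_assoc _ hA.1.eigenvectorUnitary.1, hUU, Matrix.one_mul]

lemma psdSqrt_posSemidef {p : ℕ} {A : Matrix (Fin p) (Fin p) ℝ} (hA : A.PosSemidef) :
    (psdSqrt hA).PosSemidef := by
  have hD : (diagonal (((↑) ∘ (√·) ∘ hA.1.eigenvalues) : Fin p → ℝ)).PosSemidef := by
    rw [Matrix.posSemidef_diagonal_iff]; intro i; simp [Real.sqrt_nonneg]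
  have := hD.conjTranspose_mul_mul_same (star hA.1.eigenvectorUnitary : Matrix (Fin p) (Fin p) ℝ)
  unfold psdSqrt
  simpa [Matrix.star_eq_conjTranspose] using this


section Toolkit

variable {n p q : ℕ}

lemma tr_sum (A B : Matrix (Fin n) (Fin p) ℝ) :
    (Aᵀ * B).trace = ∑ i, ∑ j, A i j * B i j := by
  simp only [Matrix.trace, Matrix.diag, Matrix.mul_apply, Matrix.transpose_apply]
  rw [Finset.sum_comm]

lemma norm_sq_eq_tr (A : Matrix (Fin n) (Fin p) ℝ) :
    ‖A‖ ^ 2 = (Aᵀ * A).trace := by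
  have hs : (0:ℝ) ≤ ∑ i, ∑ j, ‖A i j‖ ^ 2 :=
    Finset.sum_nonneg fun i _ => Finset.sum_nonneg fun j _ => by positivity
  have hs2 : (0:ℝ) ≤ ∑ i, ∑ j, ‖A i j‖ ^ (2:ℝ) :=
    Finset.sum_nonneg fun i _ => Finset.sum_nonneg fun j _ => by positivity
  rw [Matrix.frobenius_norm_def, ← Real.sqrt_eq_rpow, Real.sq_sqrt hs2, tr_sum]
  have : ∀ (x : ℝ), x ^ (2:ℝ) = x * x := fun x => by
    rw [show ((2:ℝ)) = ((2:ℕ):ℝ) by norm_num, Real.rpow_natCast]; ring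
  simp only [this, Real.norm_eq_abs, abs_mul_abs_self]

lemma sq_le_imp_le {a b : ℝ} (ha : 0 ≤ a) (hb : 0 ≤ b) (h : a ^ 2 ≤ b ^ 2) : a ≤ b := by
  nlinarith

lemma tr_CS (A B : Matrix (Fin n) (Fin p) ℝ) :
    |(Aᵀ * B).trace| ≤ ‖A‖ * ‖B‖ := by
  apply sq_le_imp_le (abs_nonneg _) (mul_nonneg (norm_nonneg _) (norm_nonneg _))
  rw [sq_abs, mul_pow, norm_sq_eq_tr, norm_sq_eq_tr, tr_sum, tr_sum, tr_sum]
  have h := Finset.sum_mul_sq_le_sq_mul_sq (Finset.univ : Finset (Fin n × Fin p))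
    (fun x => A x.1 x.2) (fun x => B x.1 x.2)
  rw [Fintype.sum_prod_type, Fintype.sum_prod_type, Fintype.sum_prod_type] at h
  simpa [pow_two] using h

lemma tr_sym_comm (E W : Matrix (Fin p) (Fin p) ℝ) (hW : Wᵀ = W) :
    (E * W).trace = (Eᵀ * W).trace := by
  conv_lhs => rw [← Matrix.trace_transpose, Matrix.transpose_mul, hW, Matrix.trace_mul_comm]

lemma dot_nonneg (v : Fin p → ℝ) : 0 ≤ v ⬝ᵥ v :=
  Finset.sum_nonneg fun i _ => mul_self_nonneg _

lemma dot_CS (u w : Fin p → ℝ) : (u ⬝ᵥ w) ^ 2 ≤ (u ⬝ᵥ u) * (w ⬝ᵥ w) := by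
  have h := Finset.sum_mul_sq_le_sq_mul_sq (Finset.univ : Finset (Fin p)) u w
  simpa [dotProduct, sq] using h

lemma quad_abs_le (M : Matrix (Fin p) (Fin p) ℝ) (v : Fin p → ℝ) :
    |v ⬝ᵥ M *ᵥ v| ≤ ‖M‖ * (v ⬝ᵥ v) := by
  have hexp : v ⬝ᵥ M *ᵥ v = ∑ x : Fin p × Fin p, M x.1 x.2 * (v x.1 * v x.2) := by
    simp only [dotProduct, Matrix.mulVec, Fintype.sum_prod_type]
    congr 1; funext i; rw [Finset.mul_sum]; congr 1; funext j; ring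
  have h := Finset.sum_mul_sq_le_sq_mul_sq (Finset.univ : Finset (Fin p × Fin p))
    (fun x => M x.1 x.2) (fun x => v x.1 * v x.2)
  have hvv : (∑ x : Fin p × Fin p, (v x.1 * v x.2)^2) = (v ⬝ᵥ v)^2 := by
    simp only [Fintype.sum_prod_type, dotProduct, sq, mul_pow]
    rw [Finset.sum_mul_sum]
    congr 1; funext i; congr 1; funext j; ring
  have hM : (∑ x : Fin p × Fin p, (M x.1 x.2)^2) = ‖M‖^2 := by
    rw [norm_sq_eq_tr, tr_sum, Fintype.sum_prod_type]
    simp [pow_two]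
  apply sq_le_imp_le (abs_nonneg _) (mul_nonneg (norm_nonneg _) (dot_nonneg v))
  rw [sq_abs, hexp, mul_pow]
  calc (∑ x : Fin p × Fin p, M x.1 x.2 * (v x.1 * v x.2)) ^ 2
      ≤ (∑ x : Fin p × Fin p, (M x.1 x.2)^2) * (∑ x : Fin p × Fin p, (v x.1 * v x.2)^2) := h
    _ = ‖M‖^2 * (v ⬝ᵥ v)^2 := by rw [hvv, hM]

lemma psd_trace_nonneg {B : Matrix (Fin p) (Fin p) ℝ} (hB : B.PosSemidef) : 0 ≤ B.trace := by
  apply Finset.sum_nonneg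
  intro i _
  have h := hB.dotProduct_mulVec_nonneg (Pi.single i 1)
  simpa [Matrix.mulVec_single, single_dotProduct] using h

lemma conj_trace_nonneg {A : Matrix (Fin p) (Fin p) ℝ} (hA : A.PosSemidef)
    (M : Matrix (Fin p) (Fin q) ℝ) : 0 ≤ (Mᵀ * A * M).trace := by
  have h := hA.conjTranspose_mul_mul_same M
  rw [Matrix.conjTranspose_eq_transpose_of_trivial] at h
  exact psd_trace_nonneg h

lemma psd_of_quad {A : Matrix (Fin p) (Fin p) ℝ} (hsym : Aᵀ = A)
    (h : ∀ v, 0 ≤ v ⬝ᵥ A *ᵥ v) : A.PosSemidef := by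
  refine Matrix.PosSemidef.of_dotProduct_mulVec_nonneg ?_ ?_
  · rw [Matrix.IsHermitian, Matrix.conjTranspose_eq_transpose_of_trivial, hsym]
  · intro x
    simpa using h x

lemma trace_quad_le {A : Matrix (Fin p) (Fin p) ℝ} {c : ℝ} (hsym : Aᵀ = A)
    (h : ∀ v, v ⬝ᵥ A *ᵥ v ≤ c * (v ⬝ᵥ v)) (M : Matrix (Fin p) (Fin q) ℝ) :
    (Mᵀ * A * M).trace ≤ c * (Mᵀ * M).trace := by
  have hpsd : (c • (1 : Matrix (Fin p) (Fin p) ℝ) - A).PosSemidef := by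
    apply psd_of_quad
    · rw [Matrix.transpose_sub, Matrix.transpose_smul, Matrix.transpose_one, hsym]
    · intro v
      have := h v
      rw [Matrix.sub_mulVec, dotProduct_sub, Matrix.smul_mulVec,
        Matrix.one_mulVec, dotProduct_smul]
      simp only [smul_eq_mul]
      linarith
  have h0 := conj_trace_nonneg hpsd M
  rw [Matrix.mul_sub, Matrix.sub_mul, Matrix.mul_smul, Matrix.mul_one, Matrix.smul_mul,
    Matrix.trace_sub, Matrix.trace_smul] at h0
  simp only [smul_eq_mul] at h0
  linarith

lemma trace_quad_ge {A : Matrix (Fin p) (Fin p) ℝ} {c : ℝ} (hsym : Aᵀ = A)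
    (h : ∀ v, c * (v ⬝ᵥ v) ≤ v ⬝ᵥ A *ᵥ v) (M : Matrix (Fin p) (Fin q) ℝ) :
    c * (Mᵀ * M).trace ≤ (Mᵀ * A * M).trace := by
  have hpsd : (A - c • (1 : Matrix (Fin p) (Fin p) ℝ)).PosSemidef := by
    apply psd_of_quad
    · rw [Matrix.transpose_sub, Matrix.transpose_smul, Matrix.transpose_one, hsym]
    · intro v
      have := h v
      rw [Matrix.sub_mulVec, dotProduct_sub, Matrix.smul_mulVec,
        Matrix.one_mulVec, dotProduct_smul]
      simp only [smul_eq_mul]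
      linarith
  have h0 := conj_trace_nonneg hpsd M
  rw [Matrix.mul_sub, Matrix.sub_mul, Matrix.mul_smul, Matrix.mul_one, Matrix.smul_mul,
    Matrix.trace_sub, Matrix.trace_smul] at h0
  simp only [smul_eq_mul] at h0
  linarith

end Toolkit

section Spec

variable {n p q : ℕ}

lemma specNorm_le_of_quad {X : Matrix (Fin n) (Fin p) ℝ} {c : ℝ} (hc : 0 ≤ c)
    (h : ∀ v, (X *ᵥ v) ⬝ᵥ (X *ᵥ v) ≤ c^2 * (v ⬝ᵥ v)) : specNorm X ≤ c := by
  apply ContinuousLinearMap.opNorm_le_bound _ hc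
  intro v
  apply sq_le_imp_le (norm_nonneg _) (by positivity)
  have h1 : ‖(LinearMap.toContinuousLinearMap
      (Matrix.toEuclideanLin X : EuclideanSpace ℝ (Fin p) →ₗ[ℝ] EuclideanSpace ℝ (Fin n))) v‖^2
      = (X *ᵥ (WithLp.equiv 2 (Fin p → ℝ)) v) ⬝ᵥ (X *ᵥ (WithLp.equiv 2 (Fin p → ℝ)) v) := by
    rw [LinearMap.coe_toContinuousLinearMap', Matrix.toEuclideanLin_apply, EuclideanSpace.norm_eq,
      Real.sq_sqrt (Finset.sum_nonneg fun i _ => by positivity)]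
    simp [dotProduct, Real.norm_eq_abs, pow_two,
      abs_mul_abs_self]
  have h2 : ‖v‖^2 = ((WithLp.equiv 2 (Fin p → ℝ)) v) ⬝ᵥ ((WithLp.equiv 2 (Fin p → ℝ)) v) := by
    rw [EuclideanSpace.norm_eq, Real.sq_sqrt (Finset.sum_nonneg fun i _ => by positivity)]
    simp [dotProduct, Real.norm_eq_abs, pow_two, abs_mul_abs_self]
  rw [mul_pow, h1, h2]
  exact h _

end Spec

section Deriv

variable {n p q : ℕ}

lemma dualCLM_apply (G V : Matrix (Fin n) (Fin p) ℝ) : dualCLM G V = (Gᵀ * V).trace := rfl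

lemma dualCLM_add (A B : Matrix (Fin n) (Fin p) ℝ) :
    dualCLM (A + B) = dualCLM A + dualCLM B := by
  apply ContinuousLinearMap.ext; intro V
  simp [dualCLM_apply, Matrix.transpose_add, Matrix.add_mul]

lemma isBBM_mul : IsBoundedBilinearMap ℝ
    (fun z : Matrix (Fin n) (Fin p) ℝ × Matrix (Fin p) (Fin q) ℝ => z.1 * z.2) where
  add_left x₁ x₂ y := Matrix.add_mul x₁ x₂ y
  smul_left c x y := Matrix.smul_mul c x y
  add_right x y₁ y₂ := Matrix.mul_add x y₁ y₂
  smul_right c x y := Matrix.mul_smul x c y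
  bound := ⟨1, one_pos, fun A B => by rw [one_mul]; exact Matrix.frobenius_norm_mul A B⟩

lemma isBBM_tr : IsBoundedBilinearMap ℝ
    (fun z : Matrix (Fin n) (Fin p) ℝ × Matrix (Fin n) (Fin p) ℝ => (z.1ᵀ * z.2).trace) where
  add_left x₁ x₂ y := by simp [Matrix.transpose_add, Matrix.add_mul]
  smul_left c x y := by simp [Matrix.transpose_smul, Matrix.smul_mul]
  add_right x y₁ y₂ := by simp [Matrix.mul_add]
  smul_right c x y := by simp [Matrix.mul_smul]
  bound := ⟨1, one_pos, fun A B => by rw [one_mul, Real.norm_eq_abs]; exact tr_CS A B⟩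

noncomputable def tCLM (n p : ℕ) : Matrix (Fin n) (Fin p) ℝ →L[ℝ] Matrix (Fin p) (Fin n) ℝ :=
  LinearMap.toContinuousLinearMap
    { toFun := fun V => Vᵀ
      map_add' := Matrix.transpose_add
      map_smul' := by intros; simp }

lemma tCLM_apply (V : Matrix (Fin n) (Fin p) ℝ) : tCLM n p V = Vᵀ := rfl

lemma hasFDerivAt_tmul (X : Matrix (Fin n) (Fin p) ℝ) :
    HasFDerivAt (fun Y : Matrix (Fin n) (Fin p) ℝ => Yᵀ * Y)
      ((isBBM_mul.deriv (Xᵀ, X)).comp ((tCLM n p).prod (ContinuousLinearMap.id ℝ _))) X := by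
  have hin : HasFDerivAt (fun Y : Matrix (Fin n) (Fin p) ℝ => (Yᵀ, Y))
      ((tCLM n p).prod (ContinuousLinearMap.id ℝ _)) X :=
    ((tCLM n p).prod (ContinuousLinearMap.id ℝ _)).hasFDerivAt
  exact HasFDerivAt.comp (f := fun Y : Matrix (Fin n) (Fin p) ℝ => (Yᵀ, Y)) X (isBBM_mul.hasFDerivAt (Xᵀ, X)) hin

end Deriv

lemma ext_g_trace {n p : ℕ} (G X V : Matrix (Fin n) (Fin p) ℝ) :
    (Gᵀ * ((3/2:ℝ) • V - (1/2:ℝ) • (X * (Xᵀ*V + Vᵀ*X) + V * (Xᵀ*X)))).trace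
      = ((G * Amap X - X * Phi (Xᵀ * G))ᵀ * V).trace := by
  unfold Amap Phi
  simp only [Matrix.transpose_sub, Matrix.transpose_add, Matrix.transpose_smul,
    Matrix.transpose_mul, Matrix.transpose_one, Matrix.transpose_transpose, Matrix.sub_mul,
    Matrix.add_mul, Matrix.mul_sub, Matrix.mul_add, Matrix.smul_mul, Matrix.mul_smul,
    Matrix.mul_one, Matrix.one_mul, Matrix.trace_sub, Matrix.trace_add, Matrix.trace_smul,
    smul_eq_mul, Matrix.mul_assoc]
  have e1 : (Gᵀ * (V * (Xᵀ * X))).trace = (Xᵀ * (X * (Gᵀ * V))).trace := by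
    rw [← Matrix.mul_assoc, Matrix.trace_mul_comm, Matrix.mul_assoc]
  have e2 : (Gᵀ * (X * (Vᵀ * X))).trace = (Xᵀ * (G * (Xᵀ * V))).trace := by
    conv_lhs => rw [← Matrix.trace_transpose]
    simp only [Matrix.transpose_mul, Matrix.transpose_transpose]
    rw [Matrix.trace_mul_cycle, Matrix.trace_mul_cycle, Matrix.mul_assoc]
  ring_nf
  linarith [e1, e2]

lemma ext_pen_trace {n p : ℕ} (X V : Matrix (Fin n) (Fin p) ℝ) (β : ℝ) :
    β/4 * (((Xᵀ*X - 1)ᵀ * (Xᵀ*V + Vᵀ*X)).trace + ((Xᵀ*V + Vᵀ*X)ᵀ * (Xᵀ*X - 1)).trace)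
      = ((β • (X * (Xᵀ*X - 1)))ᵀ * V).trace := by
  set D := Xᵀ*X - 1 with hD
  have hDt : Dᵀ = D := by
    rw [hD, Matrix.transpose_sub, Matrix.transpose_mul, Matrix.transpose_transpose,
      Matrix.transpose_one]
  have e0 : ((Xᵀ*V) * D).trace = ((D*Xᵀ) * V).trace := by
    rw [Matrix.trace_mul_comm, Matrix.mul_assoc]
  have e1 : ((Vᵀ*X) * D).trace = ((D*Xᵀ) * V).trace := by
    conv_lhs => rw [← Matrix.trace_transpose]
    simp only [Matrix.transpose_mul, Matrix.transpose_transpose, hDt]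
    rw [← Matrix.mul_assoc]
  simp only [Matrix.transpose_add, Matrix.transpose_mul, Matrix.transpose_transpose, hDt,
    Matrix.transpose_smul, Matrix.add_mul, Matrix.mul_add, Matrix.smul_mul,
    Matrix.trace_add, Matrix.trace_smul, smul_eq_mul]
  have e2 : (D * (Vᵀ*X)).trace = ((D*Xᵀ) * V).trace := by
    rw [Matrix.trace_mul_comm]; exact e1
  have e3 : (D * (Xᵀ*V)).trace = ((D*Xᵀ) * V).trace := by
    rw [Matrix.trace_mul_comm]; exact e0
  rw [e0, e1, e2, e3]; ring

lemma key_ip {n p : ℕ} (G X : Matrix (Fin n) (Fin p) ℝ) :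
    ((G * Amap X - X * Phi (Xᵀ * G))ᵀ * (X * (Xᵀ*X - 1))).trace
      = -(3/2) * ((Phi (Xᵀ*G))ᵀ * ((Xᵀ*X - 1) * (Xᵀ*X - 1))).trace := by
  unfold Amap Phi
  simp only [Matrix.transpose_sub, Matrix.transpose_add, Matrix.transpose_smul,
    Matrix.transpose_mul, Matrix.transpose_one, Matrix.transpose_transpose, Matrix.sub_mul,
    Matrix.add_mul, Matrix.mul_sub, Matrix.mul_add, Matrix.smul_mul, Matrix.mul_smul,
    Matrix.mul_one, Matrix.one_mul, Matrix.trace_sub, Matrix.trace_add, Matrix.trace_smul,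
    smul_eq_mul, Matrix.mul_assoc]
  have a1 : (Xᵀ * (X * (Gᵀ * (X * (Xᵀ * X))))).trace
      = (Gᵀ * (X * (Xᵀ * (X * (Xᵀ * X))))).trace := by
    rw [Matrix.trace_mul_comm]; simp only [Matrix.mul_assoc]
    rw [Matrix.trace_mul_comm]; simp only [Matrix.mul_assoc]
  have a2 : (Xᵀ * (G * (Xᵀ * (X * (Xᵀ * X))))).trace
      = (Gᵀ * (X * (Xᵀ * (X * (Xᵀ * X))))).trace := by
    conv_lhs => rw [← Matrix.trace_transpose]
    simp only [Matrix.transpose_mul, Matrix.transpose_transpose, Matrix.mul_assoc]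
    rw [Matrix.trace_mul_comm]; simp only [Matrix.mul_assoc]
    rw [Matrix.trace_mul_comm]; simp only [Matrix.mul_assoc]
    rw [Matrix.trace_mul_comm]; simp only [Matrix.mul_assoc]
    rw [Matrix.trace_mul_comm]; simp only [Matrix.mul_assoc]
  have a3 : (Xᵀ * (X * (Gᵀ * X))).trace = (Gᵀ * (X * (Xᵀ * X))).trace := by
    rw [Matrix.trace_mul_comm]; simp only [Matrix.mul_assoc]
    rw [Matrix.trace_mul_comm]; simp only [Matrix.mul_assoc]
  have a4 : (Xᵀ * (G * (Xᵀ * X))).trace = (Gᵀ * (X * (Xᵀ * X))).trace := by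
    conv_lhs => rw [← Matrix.trace_transpose]
    simp only [Matrix.transpose_mul, Matrix.transpose_transpose, Matrix.mul_assoc]
    rw [Matrix.trace_mul_comm]; simp only [Matrix.mul_assoc]
    rw [Matrix.trace_mul_comm]; simp only [Matrix.mul_assoc]
  have a5 : (Xᵀ * G).trace = (Gᵀ * X).trace := by
    conv_lhs => rw [← Matrix.trace_transpose]
    simp only [Matrix.transpose_mul, Matrix.transpose_transpose]
  rw [a1, a2, a3, a4, a5]
  ring

lemma hasFDerivAt_XAmap {n p : ℕ} (X : Matrix (Fin n) (Fin p) ℝ) :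
    ∃ L : Matrix (Fin n) (Fin p) ℝ →L[ℝ] Matrix (Fin n) (Fin p) ℝ,
      HasFDerivAt (fun Y : Matrix (Fin n) (Fin p) ℝ => Y * Amap Y) L X ∧
      ∀ V, L V = (3/2:ℝ) • V - (1/2:ℝ) • (X * (Xᵀ*V + Vᵀ*X) + V * (Xᵀ*X)) := by
  classical
  set L1 : Matrix (Fin n) (Fin p) ℝ →L[ℝ] Matrix (Fin p) (Fin p) ℝ :=
    (isBBM_mul.deriv (Xᵀ, X)).comp ((tCLM n p).prod (ContinuousLinearMap.id ℝ _)) with hL1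
  set L2 : Matrix (Fin n) (Fin p) ℝ →L[ℝ] Matrix (Fin n) (Fin p) ℝ :=
    (isBBM_mul.deriv (X, Xᵀ*X)).comp ((ContinuousLinearMap.id ℝ _).prod L1) with hL2
  refine ⟨(3/2:ℝ) • ContinuousLinearMap.id ℝ _ - (1/2:ℝ) • L2, ?_, ?_⟩
  · have h3 : HasFDerivAt (fun Y : Matrix (Fin n) (Fin p) ℝ => Y * (Yᵀ * Y)) L2 X := by
      have hin : HasFDerivAt (fun Y : Matrix (Fin n) (Fin p) ℝ => (Y, Yᵀ * Y))
          ((ContinuousLinearMap.id ℝ _).prod L1) X :=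
        (hasFDerivAt_id X).prodMk (hasFDerivAt_tmul X)
      exact HasFDerivAt.comp (f := fun Y : Matrix (Fin n) (Fin p) ℝ => (Y, Yᵀ * Y)) X
        (isBBM_mul.hasFDerivAt (X, Xᵀ * X)) hin
    have hfun : (fun Y : Matrix (Fin n) (Fin p) ℝ => Y * Amap Y)
        = fun Y => (3/2:ℝ) • Y - (1/2:ℝ) • (Y * (Yᵀ * Y)) := by
      funext Y
      show Y * ((3/2:ℝ) • 1 - (1/2:ℝ) • (Yᵀ * Y)) = _
      rw [Matrix.mul_sub, Matrix.mul_smul, Matrix.mul_one, Matrix.mul_smul]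
    rw [hfun]
    exact ((hasFDerivAt_id X).const_smul (3/2:ℝ)).sub (h3.const_smul (1/2:ℝ))
  · intro V
    rfl

lemma hasGradAt_g {n p : ℕ} (f : Matrix (Fin n) (Fin p) ℝ → ℝ) (GG X : Matrix (Fin n) (Fin p) ℝ)
    (hf : HasGradAt f (X * Amap X) GG) :
    HasGradAt (g f) X (GG * Amap X - X * Phi (Xᵀ * GG)) := by
  obtain ⟨L, hL, hLapp⟩ := hasFDerivAt_XAmap X
  have hcomp : HasFDerivAt (g f) ((dualCLM GG).comp L) X :=
    HasFDerivAt.comp (f := fun Y : Matrix (Fin n) (Fin p) ℝ => Y * Amap Y) X hf hL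
  have hEq : dualCLM (GG * Amap X - X * Phi (Xᵀ * GG)) = (dualCLM GG).comp L := by
    apply ContinuousLinearMap.ext; intro V
    rw [ContinuousLinearMap.comp_apply, dualCLM_apply, dualCLM_apply, hLapp]
    exact (ext_g_trace GG X V).symm
  unfold HasGradAt
  rw [hEq]
  exact hcomp

lemma hasGradAt_pen {n p : ℕ} (β : ℝ) (X : Matrix (Fin n) (Fin p) ℝ) :
    HasGradAt (fun Y : Matrix (Fin n) (Fin p) ℝ => β/4 * ‖Yᵀ*Y - 1‖^2) X
      (β • (X * (Xᵀ*X - 1))) := by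
  classical
  set D0 : Matrix (Fin p) (Fin p) ℝ := Xᵀ*X - 1 with hD0
  set L1 : Matrix (Fin n) (Fin p) ℝ →L[ℝ] Matrix (Fin p) (Fin p) ℝ :=
    (isBBM_mul.deriv (Xᵀ, X)).comp ((tCLM n p).prod (ContinuousLinearMap.id ℝ _)) with hL1
  set Ls : Matrix (Fin p) (Fin p) ℝ →L[ℝ] ℝ :=
    (isBBM_tr.deriv (D0, D0)).comp ((ContinuousLinearMap.id ℝ _).prod
      (ContinuousLinearMap.id ℝ _)) with hLs
  have hDdiff : HasFDerivAt (fun Y : Matrix (Fin n) (Fin p) ℝ => Yᵀ*Y - 1) L1 X :=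
    (hasFDerivAt_tmul X).sub_const 1
  have hs : HasFDerivAt (fun M : Matrix (Fin p) (Fin p) ℝ => (Mᵀ * M).trace) Ls D0 := by
    have hin : HasFDerivAt (fun M : Matrix (Fin p) (Fin p) ℝ => (M, M))
        ((ContinuousLinearMap.id ℝ _).prod (ContinuousLinearMap.id ℝ _)) D0 :=
      (hasFDerivAt_id D0).prodMk (hasFDerivAt_id D0)
    exact HasFDerivAt.comp (f := fun M : Matrix (Fin p) (Fin p) ℝ => (M, M)) D0
      (isBBM_tr.hasFDerivAt (D0, D0)) hin
  have hcomp : HasFDerivAt (fun Y : Matrix (Fin n) (Fin p) ℝ => β/4 * ((Yᵀ*Y - 1)ᵀ * (Yᵀ*Y - 1)).trace)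
      ((β/4) • (Ls.comp L1)) X := (HasFDerivAt.comp X hs hDdiff).const_mul (β/4)
  have hfun : (fun Y : Matrix (Fin n) (Fin p) ℝ => β/4 * ‖Yᵀ*Y - 1‖^2)
      = fun Y : Matrix (Fin n) (Fin p) ℝ => β/4 * ((Yᵀ*Y - 1)ᵀ * (Yᵀ*Y - 1)).trace := by
    funext Y; rw [norm_sq_eq_tr]
  have hEq : dualCLM (β • (X * (Xᵀ*X - 1))) = (β/4) • (Ls.comp L1) := by
    apply ContinuousLinearMap.ext; intro V
    rw [dualCLM_apply]
    have happ : ((β/4) • (Ls.comp L1)) V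
        = β/4 * ((D0ᵀ * (Xᵀ*V + Vᵀ*X)).trace + ((Xᵀ*V + Vᵀ*X)ᵀ * D0).trace) := by
      rfl
    rw [happ, hD0]
    exact (ext_pen_trace X V β).symm
  unfold HasGradAt
  rw [hfun, hEq]
  exact hcomp

lemma hasGradAt_unique {n p : ℕ} {φ : Matrix (Fin n) (Fin p) ℝ → ℝ}
    {X G G' : Matrix (Fin n) (Fin p) ℝ}
    (h1 : HasGradAt φ X G) (h2 : HasGradAt φ X G') : G = G' := by
  have h := HasFDerivAt.unique h1 h2
  ext i j
  have h3 := congrArg (fun L : Matrix (Fin n) (Fin p) ℝ →L[ℝ] ℝ =>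
    L (Matrix.single i j 1)) h
  simp only [dualCLM_apply] at h3
  rw [tr_sum, tr_sum] at h3
  simpa [Matrix.single, Matrix.of_apply, mul_ite, mul_one, mul_zero,
    ite_and, Finset.sum_ite_eq, Finset.sum_ite_eq', eq_comm] using h3


section Facts

variable {n p : ℕ}

lemma dot_mulVec_self (X : Matrix (Fin n) (Fin p) ℝ) (v : Fin p → ℝ) :
    (X *ᵥ v) ⬝ᵥ (X *ᵥ v) = v ⬝ᵥ (Xᵀ * X) *ᵥ v := by
  conv_rhs => rw [← Matrix.mulVec_mulVec, Matrix.dotProduct_mulVec, Matrix.vecMul_transpose]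

lemma norm_Phi_le (M : Matrix (Fin p) (Fin p) ℝ) : ‖Phi M‖ ≤ ‖M‖ := by
  unfold Phi
  calc ‖(1/2 : ℝ) • (M + Mᵀ)‖ = |(1/2 : ℝ)| * ‖M + Mᵀ‖ := by rw [norm_smul, Real.norm_eq_abs]
    _ ≤ (1/2) * (‖M‖ + ‖Mᵀ‖) := by
        rw [abs_of_nonneg (by norm_num : (0:ℝ) ≤ 1/2)]
        exact mul_le_mul_of_nonneg_left (norm_add_le M Mᵀ) (by norm_num)
    _ = ‖M‖ := by rw [Matrix.frobenius_norm_transpose]; ring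

lemma norm_add_smul_sq (A B : Matrix (Fin n) (Fin p) ℝ) (c : ℝ) :
    ‖A + c • B‖^2 = ‖A‖^2 + 2*c*(Aᵀ*B).trace + c^2*‖B‖^2 := by
  rw [norm_sq_eq_tr, norm_sq_eq_tr, norm_sq_eq_tr]
  have hsym : (Bᵀ*A).trace = (Aᵀ*B).trace := by
    conv_lhs => rw [← Matrix.trace_transpose]
    simp only [Matrix.transpose_mul, Matrix.transpose_transpose]
  simp only [Matrix.transpose_add, Matrix.transpose_smul, Matrix.add_mul, Matrix.mul_add,
    Matrix.smul_mul, Matrix.mul_smul, Matrix.trace_add, Matrix.trace_smul, smul_smul,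
    smul_eq_mul]
  rw [hsym]; ring

lemma quad_lower {X : Matrix (Fin n) (Fin p) ℝ} (hX : ‖Xᵀ * X - 1‖ ≤ 1/6) (v : Fin p → ℝ) :
    5/6 * (v ⬝ᵥ v) ≤ v ⬝ᵥ (Xᵀ * X) *ᵥ v := by
  have h1 := quad_abs_le (Xᵀ * X - 1) v
  have h2 : v ⬝ᵥ (Xᵀ * X - 1) *ᵥ v = v ⬝ᵥ (Xᵀ * X) *ᵥ v - v ⬝ᵥ v := by
    rw [Matrix.sub_mulVec, dotProduct_sub, Matrix.one_mulVec]
  rw [h2] at h1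
  have h3 : ‖Xᵀ * X - 1‖ * (v ⬝ᵥ v) ≤ 1/6 * (v ⬝ᵥ v) :=
    mul_le_mul_of_nonneg_right hX (dot_nonneg v)
  have := (abs_le.mp (le_trans h1 h3)).1
  linarith

lemma quad_upper {X : Matrix (Fin n) (Fin p) ℝ} (hX : ‖Xᵀ * X - 1‖ ≤ 1/6) (v : Fin p → ℝ) :
    v ⬝ᵥ (Xᵀ * X) *ᵥ v ≤ 7/6 * (v ⬝ᵥ v) := by
  have h1 := quad_abs_le (Xᵀ * X - 1) v
  have h2 : v ⬝ᵥ (Xᵀ * X - 1) *ᵥ v = v ⬝ᵥ (Xᵀ * X) *ᵥ v - v ⬝ᵥ v := by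
    rw [Matrix.sub_mulVec, dotProduct_sub, Matrix.one_mulVec]
  rw [h2] at h1
  have h3 : ‖Xᵀ * X - 1‖ * (v ⬝ᵥ v) ≤ 1/6 * (v ⬝ᵥ v) :=
    mul_le_mul_of_nonneg_right hX (dot_nonneg v)
  have := (abs_le.mp (le_trans h1 h3)).2
  linarith

lemma quad_XXt {X : Matrix (Fin n) (Fin p) ℝ} (hX : ‖Xᵀ * X - 1‖ ≤ 1/6) (v : Fin n → ℝ) :
    v ⬝ᵥ (X * Xᵀ) *ᵥ v ≤ 7/6 * (v ⬝ᵥ v) := by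
  have hq : v ⬝ᵥ (X * Xᵀ) *ᵥ v = (Xᵀ *ᵥ v) ⬝ᵥ (Xᵀ *ᵥ v) := by
    rw [dot_mulVec_self Xᵀ v, Matrix.transpose_transpose]
  set w : Fin p → ℝ := Xᵀ *ᵥ v with hw
  have hvXw : v ⬝ᵥ X *ᵥ w = w ⬝ᵥ w := by
    rw [Matrix.dotProduct_mulVec, ← Matrix.mulVec_transpose]
  have hCS := dot_CS v (X *ᵥ w)
  rw [hvXw] at hCS
  have hXw : (X *ᵥ w) ⬝ᵥ (X *ᵥ w) ≤ 7/6 * (w ⬝ᵥ w) := by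
    rw [dot_mulVec_self]; exact quad_upper hX w
  have hww := dot_nonneg w
  have hvv := dot_nonneg v
  rw [hq]
  nlinarith [mul_le_mul_of_nonneg_left hXw hvv]

lemma Kt_sym (X : Matrix (Fin n) (Fin p) ℝ) : (Xᵀ * X)ᵀ = Xᵀ * X := by
  rw [Matrix.transpose_mul, Matrix.transpose_transpose]

lemma XXt_sym (X : Matrix (Fin n) (Fin p) ℝ) : (X * Xᵀ)ᵀ = X * Xᵀ := by
  rw [Matrix.transpose_mul, Matrix.transpose_transpose]

lemma specX_le {X : Matrix (Fin n) (Fin p) ℝ} (hX : ‖Xᵀ * X - 1‖ ≤ 1/6) :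
    specNorm X ≤ 13/12 := by
  apply specNorm_le_of_quad (by norm_num)
  intro v
  rw [dot_mulVec_self]
  calc v ⬝ᵥ (Xᵀ * X) *ᵥ v ≤ 7/6 * (v ⬝ᵥ v) := quad_upper hX v
    _ ≤ (13/12)^2 * (v ⬝ᵥ v) := by nlinarith [dot_nonneg v]

lemma pst_facts {X : Matrix (Fin n) (Fin p) ℝ} (hX : ‖Xᵀ * X - 1‖ ≤ 1/6) :
    (Pst X)ᵀ * Pst X = 1 ∧ ‖X - Pst X‖ ≤ ‖Xᵀ * X - 1‖ := by
  classical
  have hK : (Xᵀ * X).PosSemidef := posSemidef_tmul X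
  set S := psdSqrt hK with hS
  have hSS : S * S = Xᵀ * X := psdSqrt_mul_self hK
  have hSpsd : S.PosSemidef := psdSqrt_posSemidef hK
  have hSt : Sᵀ = S := by
    rw [← Matrix.conjTranspose_eq_transpose_of_trivial]; exact hSpsd.1
  have hKpd : (Xᵀ * X).PosDef := by
    refine Matrix.PosDef.of_dotProduct_mulVec_pos hK.1 (fun x hx => ?_)
    have h5 := quad_lower hX x
    have hxx : 0 < x ⬝ᵥ x := by
      rcases lt_or_eq_of_le (dot_nonneg x) with h | h
      · exact h
      · exact absurd (dotProduct_self_eq_zero.mp h.symm) hx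
    have : (0:ℝ) < x ⬝ᵥ (Xᵀ * X) *ᵥ x := by nlinarith
    simpa using this
  have hdet : IsUnit S.det := by
    have h1 : S.det * S.det = (Xᵀ*X).det := by rw [← Matrix.det_mul, hSS]
    have h2 : 0 < (Xᵀ*X).det := hKpd.det_pos
    refine isUnit_iff_ne_zero.mpr (fun h => ?_)
    rw [h, mul_zero] at h1
    linarith
  have hSinv : S * S⁻¹ = 1 := Matrix.mul_nonsing_inv S hdet
  have hinvS : S⁻¹ * S = 1 := Matrix.nonsing_inv_mul S hdet
  have hSinvT : (S⁻¹)ᵀ = S⁻¹ := by rw [Matrix.transpose_nonsing_inv, hSt]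
  have hPdef : Pst X = X * S⁻¹ := rfl
  have hPtP : (Pst X)ᵀ * Pst X = 1 := by
    rw [hPdef, Matrix.transpose_mul, hSinvT, Matrix.mul_assoc, ← Matrix.mul_assoc Xᵀ X S⁻¹,
      ← hSS, Matrix.mul_assoc S S S⁻¹, hSinv, Matrix.mul_one, hinvS]
  refine ⟨hPtP, ?_⟩
  have hXP : X - Pst X = Pst X * (S - 1) := by
    rw [hPdef, Matrix.mul_sub, Matrix.mul_one, Matrix.mul_assoc, hinvS, Matrix.mul_one]
  have h1 : ‖X - Pst X‖^2 = ‖S - 1‖^2 := by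
    rw [hXP, norm_sq_eq_tr, norm_sq_eq_tr, Matrix.transpose_mul, Matrix.mul_assoc,
      ← Matrix.mul_assoc (Pst X)ᵀ (Pst X) (S - 1), hPtP, Matrix.one_mul]
  have hfact : Xᵀ*X - 1 = (S + 1) * (S - 1) := by
    have h : (S + 1) * (S - 1) = S * S - 1 := by noncomm_ring
    rw [h, hSS]
  have h2 : ‖S - 1‖^2 ≤ ‖Xᵀ*X - 1‖^2 := by
    rw [norm_sq_eq_tr, norm_sq_eq_tr, hfact]
    have hexp : ((S+1)*(S-1))ᵀ * ((S+1)*(S-1))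
        = (S-1)ᵀ * (S*S) * (S-1) + ((S-1)ᵀ * S * (S-1) + (S-1)ᵀ * S * (S-1))
          + (S-1)ᵀ * (S-1) := by
      rw [Matrix.transpose_mul, Matrix.transpose_add, Matrix.transpose_one, hSt]
      noncomm_ring
    rw [hexp, Matrix.trace_add, Matrix.trace_add, Matrix.trace_add]
    have hh1 : 0 ≤ ((S-1)ᵀ * (S*S) * (S-1)).trace := by
      have hrw : (S-1)ᵀ * (S*S) * (S-1) = (S*(S-1))ᵀ * (S*(S-1)) := by
        rw [Matrix.transpose_mul, hSt]; noncomm_ring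
      rw [hrw, ← norm_sq_eq_tr]
      positivity
    have hh2 : 0 ≤ ((S-1)ᵀ * S * (S-1)).trace := conj_trace_nonneg hSpsd _
    linarith
  exact sq_le_imp_le (norm_nonneg _) (norm_nonneg _) (h1 ▸ h2)

end Facts



lemma endgame {a b d C t1 t2 M1 beta : ℝ}
    (hnorm : C^2 = a^2 + 2*beta*t1 + beta^2*t2)
    (ht1 : -(13/8 * M1 * d^2) ≤ t1)
    (ht2 : 5/6 * d^2 ≤ t2)
    (hbm : 12 * M1 ≤ beta) (hbeta : 0 < beta)
    (hbb : b ≤ a + beta/6 * d)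
    (ha0 : 0 ≤ a) (hb0 : 0 ≤ b) (hd0 : 0 ≤ d) (hC0 : 0 ≤ C) (hM10 : 0 ≤ M1) :
    1 / 2 * b + beta / 4 * d ≤ C := by
  have k1 : 2*beta*(-(13/8 * M1 * d^2)) ≤ 2*beta*t1 :=
    mul_le_mul_of_nonneg_left ht1 (by linarith)
  have hbm2 : 12*(beta*M1) ≤ beta^2 := by nlinarith
  have k2 : 12*(beta*M1)*d^2 ≤ beta^2*d^2 := mul_le_mul_of_nonneg_right hbm2 (sq_nonneg _)
  have k3 : beta^2*(5/6*d^2) ≤ beta^2*t2 := mul_le_mul_of_nonneg_left ht2 (sq_nonneg beta)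
  have step1 : a^2 + (9/16)*(beta*d)^2 ≤ C^2 := by linarith
  have step2 : (a + (3/4)*(beta*d))^2 ≤ 2*C^2 := by
    nlinarith [sq_nonneg (a - (3/4)*(beta*d))]
  have hbd0 : (0:ℝ) ≤ beta*d := mul_nonneg hbeta.le hd0
  have step3 : b + (7/12)*(beta*d) ≤ a + (3/4)*(beta*d) := by linarith
  have hs0 : (0:ℝ) ≤ b + (7/12)*(beta*d) := by linarith
  have hsq : (b + (7/12)*(beta*d))^2 ≤ (a + (3/4)*(beta*d))^2 := pow_le_pow_left₀ hs0 step3 2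
  have step4 : (1/2 * b + beta/4 * d)^2 ≤ C^2 := by nlinarith [mul_nonneg hb0 hbd0, sq_nonneg b]
  nlinarith [step4]


set_option maxHeartbeats 1000000 in
theorem statement_15 {n p : ℕ} (f : Matrix (Fin n) (Fin p) ℝ → ℝ) (β M₁ M₂ : ℝ)
    (gradf gradg : Matrix (Fin n) (Fin p) ℝ → Matrix (Fin n) (Fin p) ℝ)
    (hgradf : ∀ Y, HasGradAt f Y (gradf Y))
    (hgradg : ∀ Y, HasGradAt (g f) Y (gradg Y))
    (hG : ∀ Y : Matrix (Fin n) (Fin p) ℝ, specNorm Y ≤ 13 / 12 →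
      ‖gradf (Y * Amap Y)‖ ≤ M₁)
    (hLipg : ∀ Y Z : Matrix (Fin n) (Fin p) ℝ, specNorm Y ≤ 13 / 12 →
      specNorm Z ≤ 13 / 12 → ‖gradg Y - gradg Z‖ ≤ M₂ * ‖Y - Z‖)
    (hβ : max (12 * M₁) (6 * M₂) ≤ β) (hβ0 : 0 < β)
    (X : Matrix (Fin n) (Fin p) ℝ) (hX : ‖Xᵀ * X - 1‖ ≤ 1 / 6)
    (Gh : Matrix (Fin n) (Fin p) ℝ) (hGh : HasGradAt (hpen f β) X Gh) :
    1 / 2 * ‖gradf (Pst X) - Pst X * Phi ((Pst X)ᵀ * gradf (Pst X))‖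
      + β / 4 * ‖Xᵀ * X - 1‖ ≤ ‖Gh‖ := by
  classical
  obtain ⟨hPtP, hXPle⟩ := pst_facts hX
  set D : Matrix (Fin p) (Fin p) ℝ := Xᵀ * X - 1 with hDdef
  set G : Matrix (Fin n) (Fin p) ℝ := gradf (X * Amap X) with hGdef2
  rw [show Pst X = id (Pst X) from rfl] at hPtP hXPle ⊢
  generalize hPdef : id (Pst X) = P at hPtP hXPle ⊢
  -- spectral norms
  have hspecX : specNorm X ≤ 13/12 := specX_le hX
  have hspecP : specNorm P ≤ 13/12 := by
    apply specNorm_le_of_quad (by norm_num)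
    intro v
    rw [dot_mulVec_self, hPtP, Matrix.one_mulVec]
    nlinarith [dot_nonneg v]
  -- gradient formulas
  have hgX : gradg X = G * Amap X - X * Phi (Xᵀ * G) :=
    hasGradAt_unique (hgradg X) (hasGradAt_g f G X (hgradf _))
  have hAmapP : Amap P = 1 := by
    unfold Amap
    rw [hPtP, ← sub_smul]
    norm_num
  have hgP : gradg P = gradf P - P * Phi (Pᵀ * gradf P) := by
    have h := hasGradAt_unique (hgradg P) (hasGradAt_g f (gradf (P * Amap P)) P (hgradf _))
    rw [hAmapP] at h
    simp only [Matrix.mul_one] at h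
    exact h
  have hGh2 : Gh = gradg X + β • (X * D) := by
    refine hasGradAt_unique hGh ?_
    unfold HasGradAt
    rw [dualCLM_add]
    exact HasFDerivAt.add (hgradg X) (hasGradAt_pen β X)
  -- basic nonnegativity
  have hd0 : (0:ℝ) ≤ ‖D‖ := norm_nonneg _
  have hb0 : (0:ℝ) ≤ ‖gradf P - P * Phi (Pᵀ * gradf P)‖ := norm_nonneg _
  have ha0 : (0:ℝ) ≤ ‖gradg X‖ := norm_nonneg _
  have hGM1 : ‖G‖ ≤ M₁ := hG X hspecX
  have hM10 : (0:ℝ) ≤ M₁ := le_trans (norm_nonneg _) hGM1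
  have hβ1 : 12 * M₁ ≤ β := le_trans (le_max_left _ _) hβ
  have hβ2 : 6 * M₂ ≤ β := le_trans (le_max_right _ _) hβ
  -- norm decomposition
  have hnorm : ‖Gh‖^2 = ‖gradg X‖^2 + 2*β*((gradg X)ᵀ*(X*D)).trace + β^2*‖X*D‖^2 := by
    rw [hGh2]; exact norm_add_smul_sq _ _ β
  -- the key inner product identity and bound
  have ht1 : ((gradg X)ᵀ*(X*D)).trace = -(3/2) * ((Phi (Xᵀ*G))ᵀ * (D*D)).trace := by
    rw [hgX, hDdef]
    exact key_ip G X
  have hXtG : ‖Xᵀ * G‖ ≤ (13/12) * M₁ := by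
    have h1 : ‖Xᵀ * G‖^2 ≤ 7/6 * ‖G‖^2 := by
      have hassoc : (Xᵀ*G)ᵀ * (Xᵀ*G) = Gᵀ * (X * Xᵀ) * G := by
        rw [Matrix.transpose_mul, Matrix.transpose_transpose]
        simp only [Matrix.mul_assoc]
      rw [norm_sq_eq_tr, norm_sq_eq_tr, hassoc]
      exact trace_quad_le (XXt_sym X) (quad_XXt hX) G
    apply sq_le_imp_le (norm_nonneg _) (by positivity)
    nlinarith [norm_nonneg G, hGM1]
  have hΦ : ‖Phi (Xᵀ * G)‖ ≤ (13/12) * M₁ := le_trans (norm_Phi_le _) hXtG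
  have hDD : ‖D * D‖ ≤ ‖D‖^2 := by
    rw [sq]; exact Matrix.frobenius_norm_mul D D
  have ht1abs : |((gradg X)ᵀ*(X*D)).trace| ≤ (13/8) * M₁ * ‖D‖^2 := by
    have htr := tr_CS (Phi (Xᵀ*G)) (D*D)
    have hmul : ‖Phi (Xᵀ*G)‖ * ‖D*D‖ ≤ (13/12*M₁) * ‖D‖^2 :=
      mul_le_mul hΦ hDD (norm_nonneg _) (by linarith)
    rw [ht1, abs_mul]
    have habs : |(-(3/2):ℝ)| = 3/2 := by norm_num
    rw [habs]
    linarith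
  have ht2 : 5/6 * ‖D‖^2 ≤ ‖X*D‖^2 := by
    have hassoc : (X*D)ᵀ*(X*D) = Dᵀ * (Xᵀ*X) * D := by
      rw [Matrix.transpose_mul]
      simp only [Matrix.mul_assoc]
    rw [norm_sq_eq_tr, norm_sq_eq_tr, hassoc]
    exact trace_quad_ge (Kt_sym X) (quad_lower hX) D
  -- Lipschitz comparison
  have hLip : ‖gradg X - gradg P‖ ≤ M₂ * ‖X - P‖ := hLipg X P hspecX hspecP
  have hXPd : ‖X - P‖ ≤ ‖D‖ := hXPle
  have hbb : ‖gradf P - P * Phi (Pᵀ * gradf P)‖ ≤ ‖gradg X‖ + β/6 * ‖D‖ := by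
    have h1 : ‖gradf P - P * Phi (Pᵀ * gradf P)‖ ≤ ‖gradg X‖ + ‖gradg X - gradg P‖ := by
      rw [← hgP]
      calc ‖gradg P‖ = ‖gradg X - (gradg X - gradg P)‖ := by rw [sub_sub_cancel]
        _ ≤ ‖gradg X‖ + ‖gradg X - gradg P‖ := norm_sub_le _ _
    rcases le_or_gt 0 M₂ with hM2 | hM2
    · have h2 : M₂ * ‖X - P‖ ≤ M₂ * ‖D‖ := mul_le_mul_of_nonneg_left hXPd hM2
      have h3 : M₂ * ‖D‖ ≤ β/6 * ‖D‖ := mul_le_mul_of_nonneg_right (by linarith) hd0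
      linarith
    · have h2 : M₂ * ‖X - P‖ ≤ 0 := by nlinarith [norm_nonneg (X - P)]
      have h3 : (0:ℝ) ≤ β/6 * ‖D‖ := by positivity
      linarith
  exact endgame hnorm (abs_le.mp ht1abs).1 ht2 hβ1 hβ0 hbb ha0 hb0 hd0
    (norm_nonneg Gh) hM10


end ExPen
end
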